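/- Let A and B be n×n Hermitian matrices with eigenvalues λ_1(A) ≥ … ≥ λ_n(A) and λ_1(B) ≥ … ≥ λ_n(B). Then Σ_i λ_i(A)·λ_{n+1−i}(B) ≤ Tr(AB) ≤ Σ_i λ_i(A)·λ_i(B). -/

import Mathlib

open Matrix

/-- Sort a finite tuple of reals in non-increasing order. -/
noncomputable def descSort {n : ℕ} (f : Fin n → ℝ) : Fin n → ℝ :=
  fun i => f (Tuple.sort f i.rev)

lemma descSort_antitone {n : ℕ} (f : Fin n → ℝ) : Antitone (descSort f) := by
  intro i j hij
  exact Tuple.monotone_sort f (Fin.rev_le_rev.mpr hij)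

lemma sum_mul_comp_eq_desc {n : ℕ} (f g : Fin n → ℝ) (σ : Equiv.Perm (Fin n)) :
    ∃ τ : Equiv.Perm (Fin n),
      ∑ i, f i * g (σ i) = ∑ i, descSort f i * descSort g (τ i) := by
  refine ⟨(Fin.revPerm.trans (Tuple.sort f)).trans
    (σ.trans ((Tuple.sort g).symm.trans Fin.revPerm)), ?_⟩
  rw [← Equiv.sum_comp (Fin.revPerm.trans (Tuple.sort f)) (fun i => f i * g (σ i))]
  simp [descSort, Fin.rev_rev]

lemma perm_bounds {n : ℕ} (f g : Fin n → ℝ) (σ : Equiv.Perm (Fin n)) :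
    (∑ i, descSort f i * descSort g i.rev) ≤ ∑ i, f i * g (σ i) ∧
      ∑ i, f i * g (σ i) ≤ ∑ i, descSort f i * descSort g i := by
  obtain ⟨τ, hτ⟩ := sum_mul_comp_eq_desc f g σ
  rw [hτ]
  constructor
  · have hav : Antivary (descSort f) (descSort g ∘ Fin.rev) :=
      (descSort_antitone f).antivary ((descSort_antitone g).comp fun i j hij =>
        Fin.rev_le_rev.mpr hij)
    have := hav.sum_mul_le_sum_mul_comp_perm (σ := τ.trans Fin.revPerm)
    simpa [Fin.rev_rev] using this
  · exact ((descSort_antitone f).monovary (descSort_antitone g)).sum_mul_comp_perm_le_sum_mul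

lemma trace_formula {n : ℕ} (A B : Matrix (Fin n) (Fin n) ℂ)
    (hA : A.IsHermitian) (hB : B.IsHermitian) :
    ∃ S : Matrix (Fin n) (Fin n) ℝ, S ∈ doublyStochastic ℝ (Fin n) ∧
      ((A * B).trace).re = ∑ i, ∑ j, hA.eigenvalues i * hB.eigenvalues j * S i j := by
  set U : Matrix (Fin n) (Fin n) ℂ := ↑hA.eigenvectorUnitary with hU
  set V : Matrix (Fin n) (Fin n) ℂ := ↑hB.eigenvectorUnitary with hV
  set W : Matrix (Fin n) (Fin n) ℂ := star U * V with hWdef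
  have hUu : star U * U = 1 := (Unitary.mem_iff.mp hA.eigenvectorUnitary.2).1
  have hUu' : U * star U = 1 := (Unitary.mem_iff.mp hA.eigenvectorUnitary.2).2
  have hVu : V * star V = 1 := (Unitary.mem_iff.mp hB.eigenvectorUnitary.2).2
  have hVu' : star V * V = 1 := (Unitary.mem_iff.mp hB.eigenvectorUnitary.2).1
  have hstarW : star W = star V * U := by
    rw [hWdef, Matrix.star_mul, star_star]
  have hWW : W * star W = 1 := by
    rw [hWdef, hstarW, Matrix.mul_assoc, ← Matrix.mul_assoc V, hVu,
      Matrix.one_mul, hUu]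
  have hWW' : star W * W = 1 := by
    rw [hWdef, hstarW, Matrix.mul_assoc, ← Matrix.mul_assoc U, hUu',
      Matrix.one_mul, hVu']
  have hnormsq : ∀ i j, W i j * star (W i j) = (Complex.normSq (W i j) : ℂ) := fun i j => by
    rw [Complex.star_def, Complex.mul_conj]
  set Dl : Matrix (Fin n) (Fin n) ℂ := diagonal (Complex.ofReal ∘ hA.eigenvalues) with hDl
  set Dm : Matrix (Fin n) (Fin n) ℂ := diagonal (Complex.ofReal ∘ hB.eigenvalues) with hDm
  refine ⟨Matrix.of fun i j => Complex.normSq (W i j), ?_, ?_⟩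
  · rw [mem_doublyStochastic_iff_sum]
    refine ⟨fun i j => Complex.normSq_nonneg _, fun i => ?_, fun j => ?_⟩
    · have h1 : (W * star W) i i = 1 := by rw [hWW]; simp
      rw [Matrix.mul_apply] at h1
      rw [Finset.sum_congr rfl fun j _ => by
        rw [Matrix.star_apply]] at h1
      have := congrArg Complex.re h1
      simpa [Complex.re_sum, Complex.normSq_apply] using this
    · have h1 : (star W * W) j j = 1 := by rw [hWW']; simp
      rw [Matrix.mul_apply] at h1
      rw [Finset.sum_congr rfl fun i _ => by
        rw [Matrix.star_apply, mul_comm]] at h1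
      have := congrArg Complex.re h1
      simpa [Complex.re_sum, Complex.normSq_apply] using this
  · have h1 : A * B = U * (Dl * W * Dm * star V) := by
      rw [hA.spectral_theorem, hB.spectral_theorem, Unitary.conjStarAlgAut_apply,
        Unitary.conjStarAlgAut_apply, ← hU, ← hV]
      simp only [Matrix.mul_assoc, hWdef]
      rfl
    have h2 : (A * B).trace = (Dl * W * Dm * star W).trace := by
      rw [h1, Matrix.trace_mul_comm, Matrix.mul_assoc (Dl * W * Dm), ← hstarW]
    rw [h2]
    have h3 : ∀ i, (Dl * W * Dm * star W) i i =
        ∑ j, ((hA.eigenvalues i * hB.eigenvalues j * Complex.normSq (W i j) : ℝ) : ℂ) := by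
      intro i
      rw [Matrix.mul_apply]
      refine Finset.sum_congr rfl fun j _ => ?_
      rw [Matrix.mul_diagonal, Matrix.diagonal_mul, Matrix.star_apply]
      have := hnormsq i j
      push_cast
      simp only [Function.comp_apply]
      linear_combination (Complex.ofReal (hA.eigenvalues i) * Complex.ofReal (hB.eigenvalues j)) * this
    rw [Matrix.trace, Complex.re_sum]
    refine Finset.sum_congr rfl fun i _ => ?_
    rw [Matrix.diag_apply, h3, Complex.re_sum]
    refine Finset.sum_congr rfl fun j _ => ?_
    simp

/-- For Hermitian `A`, `B` with eigenvalues in non-increasing order,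
`∑ λᵢ(A) λ_{n+1-i}(B) ≤ Tr(AB) ≤ ∑ λᵢ(A) λᵢ(B)`. -/
theorem stmt14 {n : ℕ} (A B : Matrix (Fin n) (Fin n) ℂ)
    (hA : A.IsHermitian) (hB : B.IsHermitian) :
    (∑ i : Fin n, descSort hA.eigenvalues i * descSort hB.eigenvalues i.rev) ≤
        ((A * B).trace).re ∧
      ((A * B).trace).re ≤
        ∑ i : Fin n, descSort hA.eigenvalues i * descSort hB.eigenvalues i := by
  obtain ⟨S, hS, hTr⟩ := trace_formula A B hA hB
  obtain ⟨w, hw0, hw1, hwS⟩ := exists_eq_sum_perm_of_mem_doublyStochastic hS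
  set lam := hA.eigenvalues
  set mu := hB.eigenvalues
  have hSij : ∀ i j, S i j = ∑ σ : Equiv.Perm (Fin n), w σ * σ.permMatrix ℝ i j := by
    intro i j
    rw [← hwS]
    simp [Matrix.sum_apply]
  have hcell : ∀ (σ : Equiv.Perm (Fin n)) i,
      ∑ j, lam i * mu j * σ.permMatrix ℝ i j = lam i * mu (σ i) := by
    intro σ i
    have : ∀ j, lam i * mu j * (σ.permMatrix ℝ) i j
        = if j = σ i then lam i * mu j else 0 := by
      intro j
      simp only [Equiv.Perm.permMatrix, PEquiv.toMatrix_apply, Equiv.toPEquiv_apply,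
        Option.mem_def, Option.some.injEq]
      split <;> rename_i h
      · simp [h.symm]
      · rw [if_neg fun hh : j = σ i => h hh.symm, mul_zero]
    simp_rw [this]
    rw [Finset.sum_ite_eq' Finset.univ (σ i) fun j => lam i * mu j]
    simp
  have hsum : ((A * B).trace).re = ∑ σ : Equiv.Perm (Fin n), w σ * ∑ i, lam i * mu (σ i) := by
    rw [hTr]
    calc ∑ i, ∑ j, lam i * mu j * S i j
        = ∑ i, ∑ j, ∑ σ : Equiv.Perm (Fin n), w σ * (lam i * mu j * σ.permMatrix ℝ i j) := by
          refine Finset.sum_congr rfl fun i _ => Finset.sum_congr rfl fun j _ => ?_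
          rw [hSij, Finset.mul_sum]
          exact Finset.sum_congr rfl fun σ _ => by ring
      _ = ∑ i, ∑ σ : Equiv.Perm (Fin n), ∑ j, w σ * (lam i * mu j * σ.permMatrix ℝ i j) :=
          Finset.sum_congr rfl fun i _ => Finset.sum_comm
      _ = ∑ σ : Equiv.Perm (Fin n), ∑ i, ∑ j, w σ * (lam i * mu j * σ.permMatrix ℝ i j) :=
          Finset.sum_comm
      _ = ∑ σ : Equiv.Perm (Fin n), w σ * ∑ i, lam i * mu (σ i) := by
          refine Finset.sum_congr rfl fun σ _ => ?_
          rw [Finset.mul_sum]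
          refine Finset.sum_congr rfl fun i _ => ?_
          rw [← Finset.mul_sum, hcell]
  rw [hsum]
  constructor
  · calc (∑ i : Fin n, descSort lam i * descSort mu i.rev)
        = ∑ σ : Equiv.Perm (Fin n), w σ * ∑ i : Fin n, descSort lam i * descSort mu i.rev := by
          rw [← Finset.sum_mul, hw1, one_mul]
      _ ≤ ∑ σ : Equiv.Perm (Fin n), w σ * ∑ i, lam i * mu (σ i) :=
          Finset.sum_le_sum fun σ _ =>
            mul_le_mul_of_nonneg_left (perm_bounds lam mu σ).1 (hw0 σ)
  · calc ∑ σ : Equiv.Perm (Fin n), w σ * ∑ i, lam i * mu (σ i)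
        ≤ ∑ σ : Equiv.Perm (Fin n), w σ * ∑ i : Fin n, descSort lam i * descSort mu i := by
          exact Finset.sum_le_sum fun σ _ =>
            mul_le_mul_of_nonneg_left (perm_bounds lam mu σ).2 (hw0 σ)
      _ = ∑ i : Fin n, descSort lam i * descSort mu i := by rw [← Finset.sum_mul, hw1, one_mul]
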